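/- Under the SGD setting with β-strong convexity, E[‖ĝ_n‖²] ≤ G² for all n, and step sizes η_n = 1/(βn), for every n ≥ 1 the iterates satisfy the recursion E[‖θ_{n+1} − θ*‖²] ≤ (1 − 2/n)·E[‖θ_n − θ*‖²] + G²/(β² n²). -/

import Mathlib

open MeasureTheory
open scoped RealInnerProductSpace

/-- Under SGD with step sizes `η n = 1/(β n)` on a `β`-strongly convex function with
minimizer `θ*` and `E[‖ĝ n‖²] ≤ G²`, for every `n ≥ 1` the iterates satisfy the recursion
`E[‖θ (n+1) − θ*‖²] ≤ (1 − 2/n) E[‖θ n − θ*‖²] + G²/(β² n²)`. -/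
theorem sgd_distance_recursion
    {Ω : Type*} [MeasurableSpace Ω] {μ : Measure Ω} [IsProbabilityMeasure μ]
    {H : Type*} [NormedAddCommGroup H] [InnerProductSpace ℝ H] [CompleteSpace H]
    [MeasurableSpace H] [BorelSpace H]
    {β G : ℝ} (hβ : 0 < β) (hG : 0 < G)
    {f : H → ℝ} (hdiff : Differentiable ℝ f)
    (hconv : ∀ x y : H,
      f y ≥ f x + ⟪gradient f x, y - x⟫ + β / 2 * ‖y - x‖ ^ 2)
    {θstar : H} (hmin : ∀ x : H, f θstar ≤ f x)
    (θ g : ℕ → Ω → H)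
    (hθmeas : ∀ n, Measurable (θ n))
    (hgmeas : ∀ n, Measurable (g n))
    (hrec : ∀ n : ℕ, 1 ≤ n → ∀ ω, θ (n + 1) ω = θ n ω - (1 / (β * n)) • g n ω)
    (hunbiased : ∀ n : ℕ, 1 ≤ n →
      μ[g n | MeasurableSpace.comap (θ n) inferInstance]
        =ᵐ[μ] fun ω => gradient f (θ n ω))
    (hg2int : ∀ n : ℕ, 1 ≤ n → Integrable (fun ω => ‖g n ω‖ ^ 2) μ)
    (hg2 : ∀ n : ℕ, 1 ≤ n → ∫ ω, ‖g n ω‖ ^ 2 ∂μ ≤ G ^ 2)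
    (hθint : ∀ n : ℕ, 1 ≤ n → Integrable (fun ω => ‖θ n ω - θstar‖ ^ 2) μ) :
    ∀ n : ℕ, 1 ≤ n →
      ∫ ω, ‖θ (n + 1) ω - θstar‖ ^ 2 ∂μ ≤
        (1 - 2 / (n : ℝ)) * ∫ ω, ‖θ n ω - θstar‖ ^ 2 ∂μ + G ^ 2 / (β ^ 2 * (n : ℝ) ^ 2) := by
  intro n hn
  have hNe : Nonempty H := ⟨θstar⟩
  -- numerics
  have hncast : (0:ℝ) < (n : ℝ) := by exact_mod_cast hn
  set η : ℝ := 1 / (β * (n : ℝ)) with hηdef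
  have hη : 0 < η := by positivity
  have hη1 : η * β = 1 / (n : ℝ) := by
    rw [hηdef]; field_simp
  have hη2 : η ^ 2 = 1 / (β ^ 2 * (n : ℝ) ^ 2) := by
    rw [hηdef]; field_simp
  -- gradient vanishes at the minimizer
  have hloc : IsLocalMin f θstar := Filter.Eventually.of_forall hmin
  have hgrad0 : gradient f θstar = 0 := by
    rw [gradient, hloc.fderiv_eq_zero, map_zero]
  -- strong monotonicity of the gradient
  have hmono : ∀ x y : H, β * ‖x - y‖ ^ 2 ≤ ⟪gradient f x - gradient f y, x - y⟫ := by
    intro x y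
    have h1 := hconv x y
    have h2 := hconv y x
    have e1 : ⟪gradient f x, y - x⟫ = -⟪gradient f x, x - y⟫ := by
      rw [← inner_neg_right, neg_sub]
    have e2 : ‖y - x‖ = ‖x - y‖ := norm_sub_rev _ _
    rw [e1, e2] at h1
    rw [inner_sub_left]
    linarith
  have hkey : ∀ x : H, β * ‖x - θstar‖ ^ 2 ≤ ⟪gradient f x, x - θstar⟫ := by
    intro x
    have := hmono x θstar
    rwa [hgrad0, sub_zero] at this
  have hinj : Function.Injective (gradient f) := by
    intro x y hxy
    have h1 := hmono x y
    rw [hxy, sub_self, inner_zero_left] at h1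
    have h2 : ‖x - y‖ = 0 := by
      by_contra hne
      have hpos : 0 < ‖x - y‖ := lt_of_le_of_ne (norm_nonneg _) (Ne.symm hne)
      have := mul_pos hβ (pow_pos hpos 2)
      linarith
    have : x - y = 0 := norm_eq_zero.mp h2
    exact sub_eq_zero.mp this
  -- small helper: from β‖v‖² ≤ 0 conclude v = 0
  have hzero_of : ∀ v : H, ⟪(0:H), v⟫ = 0 := fun v => inner_zero_left v
  -- setup
  have hm : MeasurableSpace.comap (θ n) inferInstance ≤ _ := (hθmeas n).comap_le
  haveI : SigmaFinite (μ.trim hm) := by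
    have : IsFiniteMeasure (μ.trim hm) := isFiniteMeasure_trim hm
    infer_instance
  set X : Ω → H := fun ω => θ n ω - θstar with hXdef
  have hrecω : ∀ ω, θ (n + 1) ω - θstar = X ω - η • g n ω := by
    intro ω
    rw [hrec n hn ω, hXdef]
    simp only [hηdef]
    abel
  have hptwise : ∀ ω, ‖θ (n + 1) ω - θstar‖ ^ 2
      = ‖X ω‖ ^ 2 - 2 * η * ⟪X ω, g n ω⟫ + η ^ 2 * ‖g n ω‖ ^ 2 := by
    intro ω
    rw [hrecω ω, norm_sub_sq_real, real_inner_smul_right, norm_smul,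
      Real.norm_eq_abs, abs_of_pos hη, mul_pow]
    ring
  by_cases hgi : Integrable (g n) μ
  · -- main case
    have hgaesm : AEStronglyMeasurable (g n) μ := hgi.aestronglyMeasurable
    have hG2mem : MemLp (g n) 2 μ :=
      (memLp_two_iff_integrable_sq_norm hgaesm).mpr (hg2int n hn)
    -- construct an m-strongly measurable version of X
    have hhSM : StronglyMeasurable[(MeasurableSpace.comap (θ n) inferInstance)] (μ[g n | (MeasurableSpace.comap (θ n) inferInstance)]) := stronglyMeasurable_condExp
    have htsep : TopologicalSpace.IsSeparable (Set.range (μ[g n | (MeasurableSpace.comap (θ n) inferInstance)])) :=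
      hhSM.isSeparable_range
    set s : Set H := Set.range (μ[g n | (MeasurableSpace.comap (θ n) inferInstance)]) ∩ Set.range (gradient f) with hsdef
    set F : H → H := Function.invFun (gradient f) with hFdef
    have hFleft : ∀ x : H, F (gradient f x) = x := fun x =>
      Function.leftInverse_invFun hinj x
    have hlip : LipschitzOnWith (β⁻¹).toNNReal F s := by
      rw [lipschitzOnWith_iff_dist_le_mul]
      rintro y1 ⟨-, x1, rfl⟩ y2 ⟨-, x2, rfl⟩
      rw [hFleft, hFleft, dist_eq_norm, dist_eq_norm,
        Real.coe_toNNReal _ (le_of_lt (inv_pos.mpr hβ))]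
      have h1 := hmono x1 x2
      have h2 := real_inner_le_norm (gradient f x1 - gradient f x2) (x1 - x2)
      have h3 : β * ‖x1 - x2‖ ≤ ‖gradient f x1 - gradient f x2‖ := by
        rcases eq_or_lt_of_le (norm_nonneg (x1 - x2)) with h | h
        · rw [← h, mul_zero]
          exact norm_nonneg _
        · nlinarith
      calc ‖x1 - x2‖ = β⁻¹ * (β * ‖x1 - x2‖) := by field_simp
        _ ≤ β⁻¹ * ‖gradient f x1 - gradient f x2‖ := by
            apply mul_le_mul_of_nonneg_left h3 (le_of_lt (inv_pos.mpr hβ))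
      
    have hssep : TopologicalSpace.IsSeparable s := htsep.mono Set.inter_subset_left
    have hWsep : TopologicalSpace.IsSeparable (F '' s) := by
      haveI := hssep.separableSpace
      rw [Set.image_eq_range]
      exact TopologicalSpace.isSeparable_range hlip.continuousOn.restrict
    set B : Set H := closure (F '' s) with hBdef
    have hBmeas : MeasurableSet B := isClosed_closure.measurableSet
    have hA : MeasurableSet[(MeasurableSpace.comap (θ n) inferInstance)] (θ n ⁻¹' B) := ⟨B, hBmeas, rfl⟩
    set X' : Ω → H := (θ n ⁻¹' B).indicator X with hX'def
    have hθnm : Measurable[(MeasurableSpace.comap (θ n) inferInstance)] (θ n) := Measurable.of_comap_le le_rfl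
    have hXm : Measurable[(MeasurableSpace.comap (θ n) inferInstance)] X :=
      (continuous_id.sub continuous_const).measurable.comp hθnm
    have hX'm : Measurable[(MeasurableSpace.comap (θ n) inferInstance)] X' := hXm.indicator hA
    have hX'SM : StronglyMeasurable[(MeasurableSpace.comap (θ n) inferInstance)] X' := by
      rw [stronglyMeasurable_iff_measurable_separable]
      refine ⟨hX'm, ?_⟩
      have h1 : Set.range X' ⊆ ((fun x => x - θstar) '' B) ∪ {0} := by
        rintro - ⟨ω, rfl⟩
        by_cases hω : ω ∈ θ n ⁻¹' B
        · left
          rw [hX'def, Set.indicator_of_mem hω]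
          exact ⟨θ n ω, hω, rfl⟩
        · right
          rw [hX'def, Set.indicator_of_notMem hω]
          rfl
      refine TopologicalSpace.IsSeparable.mono ?_ h1
      refine TopologicalSpace.IsSeparable.union ?_ ?_
      · exact (hWsep.closure).image (continuous_id.sub continuous_const)
      · exact (Set.finite_singleton 0).isSeparable
    have hXX' : X =ᵐ[μ] X' := by
      filter_upwards [hunbiased n hn] with ω hω
      have hmem : gradient f (θ n ω) ∈ s := by
        constructor
        · exact ⟨ω, hω⟩
        · exact ⟨θ n ω, rfl⟩
      have hθB : θ n ω ∈ B := by
        apply subset_closure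
        exact ⟨gradient f (θ n ω), hmem, hFleft (θ n ω)⟩
      exact (Set.indicator_of_mem (show ω ∈ θ n ⁻¹' B from hθB) X).symm
    have hXaesm : AEStronglyMeasurable X μ := ⟨X', hX'SM.mono hm, hXX'⟩
    have hXmem : MemLp X 2 μ :=
      (memLp_two_iff_integrable_sq_norm hXaesm).mpr (hθint n hn)
    set X2 : Lp H 2 μ := hXmem.toLp X with hX2def
    set G2 : Lp H 2 μ := hG2mem.toLp (g n) with hG2def
    have hX2 : (X2 : Ω → H) =ᵐ[μ] X := hXmem.coeFn_toLp
    have hG2' : (G2 : Ω → H) =ᵐ[μ] g n := hG2mem.coeFn_toLp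
    -- the condexpL2 of G2 coincides a.e. with the conditional expectation
    have hbridge : (↑↑(condExpL2 H ℝ hm G2) : Ω → H) =ᵐ[μ] μ[g n | (MeasurableSpace.comap (θ n) inferInstance)] := by
      refine ae_eq_condExp_of_forall_setIntegral_eq hm hgi ?_ ?_ ?_
      · intro t ht hμt
        exact integrableOn_condExpL2_of_measure_ne_top hm hμt.ne _
      · intro t ht hμt
        rw [integral_condExpL2_eq hm G2 ht hμt.ne]
        exact setIntegral_congr_ae (hm t ht) (hG2'.mono fun x hx _ => hx)
      · exact aestronglyMeasurable_condExpL2 hm G2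
    have hcomb : (↑↑(condExpL2 H ℝ hm G2) : Ω → H) =ᵐ[μ] fun ω => gradient f (θ n ω) :=
      hbridge.trans (hunbiased n hn)
    have hX2m : AEStronglyMeasurable[MeasurableSpace.comap (θ n) inferInstance] (X2 : Ω → H) μ := ⟨X', hX'SM, hX2.trans hXX'⟩
    have hinnerL2 : ⟪(↑(condExpL2 H ℝ hm G2) : Ω →₂[μ] H), X2⟫ = ⟪G2, X2⟫ :=
      inner_condExpL2_eq_inner_fun hm G2 X2 hX2m
    have hS : ∫ ω, ⟪X ω, g n ω⟫ ∂μ = ∫ ω, ⟪gradient f (θ n ω), X ω⟫ ∂μ := by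
      calc ∫ ω, ⟪X ω, g n ω⟫ ∂μ
          = ∫ ω, ⟪G2 ω, X2 ω⟫ ∂μ := by
            refine integral_congr_ae ?_
            filter_upwards [hX2, hG2'] with ω h1 h2
            rw [h1, h2, real_inner_comm]
        _ = ⟪G2, X2⟫ := (L2.inner_def G2 X2).symm
        _ = ⟪(↑(condExpL2 H ℝ hm G2) : Ω →₂[μ] H), X2⟫ := hinnerL2.symm
        _ = ∫ ω, ⟪(↑(condExpL2 H ℝ hm G2) : Ω →₂[μ] H) ω, X2 ω⟫ ∂μ :=
            L2.inner_def _ _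
        _ = ∫ ω, ⟪gradient f (θ n ω), X ω⟫ ∂μ := by
            refine integral_congr_ae ?_
            filter_upwards [hcomb, hX2] with ω h1 h2
            rw [h1, h2]
    have hSint : Integrable (fun ω => ⟪gradient f (θ n ω), X ω⟫) μ := by
      refine (L2.integrable_inner (𝕜 := ℝ)
        ((condExpL2 H ℝ hm G2 : Ω →₂[μ] H)) X2).congr ?_
      filter_upwards [hcomb, hX2] with ω h1 h2
      rw [h1, h2]
    have hinnerInt : Integrable (fun ω => ⟪X ω, g n ω⟫) μ := by
      refine (L2.integrable_inner (𝕜 := ℝ) G2 X2).congr ?_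
      filter_upwards [hX2, hG2'] with ω h1 h2
      rw [h1, h2, real_inner_comm]
    have hSlb : β * ∫ ω, ‖X ω‖ ^ 2 ∂μ ≤ ∫ ω, ⟪gradient f (θ n ω), X ω⟫ ∂μ := by
      rw [← integral_const_mul]
      refine integral_mono ((hθint n hn).const_mul β) hSint ?_
      intro ω
      exact hkey (θ n ω)
    have hSge : β * ∫ ω, ‖X ω‖ ^ 2 ∂μ ≤ ∫ ω, ⟪X ω, g n ω⟫ ∂μ := by
      rw [hS]; exact hSlb
    -- expand the integral
    have hexpand : ∫ ω, ‖θ (n + 1) ω - θstar‖ ^ 2 ∂μ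
        = ∫ ω, ‖X ω‖ ^ 2 ∂μ - 2 * η * ∫ ω, ⟪X ω, g n ω⟫ ∂μ
          + η ^ 2 * ∫ ω, ‖g n ω‖ ^ 2 ∂μ := by
      have i1 : Integrable (fun ω => 2 * η * ⟪X ω, g n ω⟫) μ := hinnerInt.const_mul _
      have i0 : Integrable (fun ω => ‖X ω‖ ^ 2) μ := hθint n hn
      have i2 : Integrable (fun ω => ‖X ω‖ ^ 2 - 2 * η * ⟪X ω, g n ω⟫) μ := i0.sub i1
      have i3 : Integrable (fun ω => η ^ 2 * ‖g n ω‖ ^ 2) μ := (hg2int n hn).const_mul _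
      calc ∫ ω, ‖θ (n + 1) ω - θstar‖ ^ 2 ∂μ
          = ∫ ω, (‖X ω‖ ^ 2 - 2 * η * ⟪X ω, g n ω⟫ + η ^ 2 * ‖g n ω‖ ^ 2) ∂μ :=
            integral_congr_ae (Filter.Eventually.of_forall hptwise)
        _ = ∫ ω, (‖X ω‖ ^ 2 - 2 * η * ⟪X ω, g n ω⟫) ∂μ + ∫ ω, η ^ 2 * ‖g n ω‖ ^ 2 ∂μ :=
            integral_add i2 i3
        _ = (∫ ω, ‖X ω‖ ^ 2 ∂μ - ∫ ω, 2 * η * ⟪X ω, g n ω⟫ ∂μ)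
              + ∫ ω, η ^ 2 * ‖g n ω‖ ^ 2 ∂μ := by rw [integral_sub i0 i1]
        _ = ∫ ω, ‖X ω‖ ^ 2 ∂μ - 2 * η * ∫ ω, ⟪X ω, g n ω⟫ ∂μ
              + η ^ 2 * ∫ ω, ‖g n ω‖ ^ 2 ∂μ := by rw [integral_const_mul, integral_const_mul]
    rw [hexpand]
    have t1 : 2 * η * (β * ∫ ω, ‖X ω‖ ^ 2 ∂μ) ≤ 2 * η * ∫ ω, ⟪X ω, g n ω⟫ ∂μ :=
      mul_le_mul_of_nonneg_left hSge (by positivity)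
    have t2 : η ^ 2 * ∫ ω, ‖g n ω‖ ^ 2 ∂μ ≤ η ^ 2 * G ^ 2 :=
      mul_le_mul_of_nonneg_left (hg2 n hn) (sq_nonneg η)
    have e3 : 2 * η * (β * ∫ ω, ‖X ω‖ ^ 2 ∂μ) = 2 / (n : ℝ) * ∫ ω, ‖X ω‖ ^ 2 ∂μ := by
      have : 2 * η * β = 2 / (n : ℝ) := by
        rw [mul_assoc, hη1]; ring
      rw [← mul_assoc, this]
    have e4 : η ^ 2 * G ^ 2 = G ^ 2 / (β ^ 2 * (n : ℝ) ^ 2) := by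
      rw [hη2]; ring
    have hXeq : ∫ ω, ‖θ n ω - θstar‖ ^ 2 ∂μ = ∫ ω, ‖X ω‖ ^ 2 ∂μ := rfl
    rw [hXeq]
    linarith [t1, t2, e3, e4]
  · -- degenerate case : g n is not integrable, so the conditional expectation is 0
    have h0 : μ[g n | (MeasurableSpace.comap (θ n) inferInstance)] = 0 := condExp_of_not_integrable hgi
    have hae : (fun ω => gradient f (θ n ω)) =ᵐ[μ] 0 := by
      have h1 := hunbiased n hn
      rw [h0] at h1
      exact h1.symm
    have hXz : ∀ᵐ ω ∂μ, X ω = 0 := by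
      filter_upwards [hae] with ω hω
      have h1 : gradient f (θ n ω) = 0 := hω
      have h2 := hkey (θ n ω)
      rw [h1, inner_zero_left] at h2
      have h3 : ‖X ω‖ = 0 := by
        show ‖θ n ω - θstar‖ = 0
        by_contra hne
        have hpos : 0 < ‖θ n ω - θstar‖ := lt_of_le_of_ne (norm_nonneg _) (Ne.symm hne)
        have := mul_pos hβ (pow_pos hpos 2)
        linarith
      exact norm_eq_zero.mp h3
    have hIn : ∫ ω, ‖θ n ω - θstar‖ ^ 2 ∂μ = 0 := by
      refine integral_eq_zero_of_ae ?_
      filter_upwards [hXz] with ω hω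
      have : θ n ω - θstar = 0 := hω
      rw [this]; simp
    have hI1 : ∫ ω, ‖θ (n + 1) ω - θstar‖ ^ 2 ∂μ = η ^ 2 * ∫ ω, ‖g n ω‖ ^ 2 ∂μ := by
      rw [← integral_const_mul]
      refine integral_congr_ae ?_
      filter_upwards [hXz] with ω hω
      rw [hptwise ω, hω]
      simp
    rw [hIn, hI1, mul_zero, zero_add]
    calc η ^ 2 * ∫ ω, ‖g n ω‖ ^ 2 ∂μ ≤ η ^ 2 * G ^ 2 :=
          mul_le_mul_of_nonneg_left (hg2 n hn) (sq_nonneg η)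
      _ = G ^ 2 / (β ^ 2 * (n : ℝ) ^ 2) := by rw [hη2]; ring
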